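/- Let (X,d) be a metric space, x₀ ∈ X, let p, q be real numbers with 0 < q < 2 < p, let λ > 0, and define v_λ(x) := (λ + d(x₀,x)^{2−q})^{1/(2−p)}. Then for every x ∈ X with x ≠ x₀, the local Lipschitz constant of v_λ satisfies lip v_λ(x) ≤ ((2−q)/(p−2)) (λ + d(x₀,x)^{2−q})^{(p−1)/(2−p)} d(x₀,x)^{1−q}. -/

import Mathlib

open Filter

/-- The local Lipschitz constant `lip u(x) = limsup_{y → x} |u y - u x| / d(x,y)`
(equal to `0`, by convention of `Real` limsups, if `x` is an isolated point). -/
noncomputable def lipConst {X : Type*} [MetricSpace X] (u : X → ℝ) (x : X) : ℝ :=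
  limsup (fun y => |u y - u x| / dist x y) (nhdsWithin x {x}ᶜ)

private lemma ckn_hasDerivAt (p q lam : ℝ) (hq2 : q < 2) (hp : 2 < p) (hlam : 0 < lam)
    {s : ℝ} (hs : 0 < s) :
    HasDerivAt (fun s : ℝ => (lam + s ^ (2 - q)) ^ ((1:ℝ) / (2 - p)))
      (-(((2 - q) / (p - 2)) * (lam + s ^ (2 - q)) ^ ((p - 1) / (2 - p)) * s ^ (1 - q))) s := by
  have hw : 0 < lam + s ^ (2 - q) :=
    lt_add_of_pos_of_le hlam (Real.rpow_nonneg hs.le _)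
  have h1 : HasDerivAt (fun s : ℝ => lam + s ^ (2 - q)) ((2 - q) * s ^ (2 - q - 1)) s :=
    (Real.hasDerivAt_rpow_const (Or.inl hs.ne')).const_add lam
  have h2 : HasDerivAt (fun w : ℝ => w ^ ((1:ℝ) / (2 - p)))
      ((1 / (2 - p)) * (lam + s ^ (2 - q)) ^ ((1:ℝ) / (2 - p) - 1)) (lam + s ^ (2 - q)) :=
    Real.hasDerivAt_rpow_const (Or.inl hw.ne')
  have := h2.comp s h1
  refine this.congr_deriv ?_
  symm
  have hne : (2:ℝ) - p ≠ 0 := by linarith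
  have hne2 : (p:ℝ) - 2 ≠ 0 := by linarith
  have he1 : (1:ℝ) / (2 - p) - 1 = (p - 1) / (2 - p) := by
    field_simp
    ring
  have he2 : 2 - q - 1 = 1 - q := by ring
  rw [he1, he2]
  generalize (lam + s ^ (2 - q)) ^ ((p - 1) / (2 - p)) = A
  generalize s ^ (1 - q) = B
  rw [show (2:ℝ) - p = -(p - 2) by ring]
  field_simp

theorem lipConst_ckn_extremal_le {X : Type*} [MetricSpace X] (x₀ : X)
    (p q : ℝ) (hq : 0 < q) (hq2 : q < 2) (hp : 2 < p)
    (lam : ℝ) (hlam : 0 < lam) (x : X) (hx : x ≠ x₀) :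
    lipConst (fun y => (lam + dist x₀ y ^ (2 - q)) ^ ((1:ℝ) / (2 - p))) x ≤
      ((2 - q) / (p - 2)) * (lam + dist x₀ x ^ (2 - q)) ^ ((p - 1) / (2 - p)) *
        dist x₀ x ^ (1 - q) := by
  set t := dist x₀ x with htdef
  have ht : 0 < t := dist_pos.mpr (Ne.symm hx)
  set f : ℝ → ℝ := fun s => (lam + s ^ (2 - q)) ^ ((1:ℝ) / (2 - p)) with hfdef
  set M : ℝ → ℝ := fun s =>
    ((2 - q) / (p - 2)) * (lam + s ^ (2 - q)) ^ ((p - 1) / (2 - p)) * s ^ (1 - q) with hMdef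
  have hMnonneg : ∀ s : ℝ, 0 ≤ s → 0 ≤ M s := by
    intro s hs
    have : (0:ℝ) ≤ (2 - q) / (p - 2) := div_nonneg (by linarith) (by linarith)
    exact mul_nonneg (mul_nonneg this (Real.rpow_nonneg
      (le_trans hlam.le (le_add_of_nonneg_right (Real.rpow_nonneg hs _))) _))
      (Real.rpow_nonneg hs _)
  -- continuity of M at t
  have hMcont : ContinuousAt M t := by
    have h1 : ContinuousAt (fun s : ℝ => lam + s ^ (2 - q)) t :=
      continuousAt_const.add (Real.continuousAt_rpow_const t _ (Or.inl ht.ne'))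
    have hw : 0 < lam + t ^ (2 - q) :=
      lt_add_of_pos_of_le hlam (Real.rpow_nonneg ht.le _)
    have h2 : ContinuousAt (fun s : ℝ => (lam + s ^ (2 - q)) ^ ((p - 1) / (2 - p))) t :=
      h1.rpow_const (Or.inl hw.ne')
    have h3 : ContinuousAt (fun s : ℝ => s ^ (1 - q)) t :=
      Real.continuousAt_rpow_const t _ (Or.inl ht.ne')
    exact (continuousAt_const.mul h2).mul h3
  by_cases hbot : nhdsWithin x {x}ᶜ = ⊥
  · rw [lipConst, hbot]
    have : limsup (fun y : X =>
        |(lam + dist x₀ y ^ (2 - q)) ^ ((1:ℝ) / (2 - p)) -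
          (lam + dist x₀ x ^ (2 - q)) ^ ((1:ℝ) / (2 - p))| / dist x y) (⊥ : Filter X) = 0 := by
      rw [limsup_eq]
      simp only [eventually_bot]
      rw [show {a : ℝ | True} = Set.univ from rfl]
      have : ¬ BddBelow (Set.univ : Set ℝ) := not_bddBelow_univ
      exact Real.sInf_of_not_bddBelow this
    rw [this]
    exact hMnonneg t ht.le
  haveI : (nhdsWithin x {x}ᶜ).NeBot := ⟨hbot⟩
  rw [lipConst]
  apply le_of_forall_pos_le_add
  intro ε hε
  have hcb : IsCoboundedUnder (· ≤ ·)
      (nhdsWithin x {x}ᶜ) (fun y => |f (dist x₀ y) - f t| / dist x y) :=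
    isCoboundedUnder_le_of_le _ (x := 0) fun y =>
      div_nonneg (abs_nonneg _) dist_nonneg
  refine limsup_le_of_le hcb ?_
  -- find δ
  obtain ⟨δ₀, hδ₀pos, hδ₀⟩ := Metric.continuousAt_iff.mp hMcont ε hε
  set δ : ℝ := min δ₀ t with hδdef
  have hδpos : 0 < δ := lt_min hδ₀pos ht
  have hδt : δ ≤ t := min_le_right _ _
  -- Lipschitz bound on Ioo (t - δ) (t + δ)
  have hlip : ∀ s₁ ∈ Set.Ioo (t - δ) (t + δ), ∀ s₂ ∈ Set.Ioo (t - δ) (t + δ),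
      ‖f s₁ - f s₂‖ ≤ (M t + ε) * ‖s₁ - s₂‖ := by
    intro s₁ hs₁ s₂ hs₂
    apply (convex_Ioo (t - δ) (t + δ)).norm_image_sub_le_of_norm_hasDerivWithin_le
      (f' := fun s => -(M s)) (fun s hs =>
        (ckn_hasDerivAt p q lam hq2 hp hlam (by
          have : t - δ < s := hs.1
          linarith [sub_nonneg.mpr hδt])).hasDerivWithinAt)
      ?_ hs₂ hs₁
    intro s hs
    have hs0 : 0 < s := by have := hs.1; linarith [sub_nonneg.mpr hδt]
    have hds : dist s t < δ₀ := by
      rw [Real.dist_eq]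
      have h1 := hs.1; have h2 := hs.2
      have : |s - t| < δ := abs_sub_lt_iff.mpr ⟨by linarith, by linarith⟩
      exact lt_of_lt_of_le this (min_le_left _ _)
    have := hδ₀ hds
    rw [Real.dist_eq] at this
    have hle : M s ≤ M t + ε := by
      have := abs_sub_lt_iff.mp this
      linarith [this.1]
    rw [norm_neg, Real.norm_eq_abs, abs_of_nonneg (hMnonneg s hs0.le)]
    exact hle
  -- eventual bound
  have hev : ∀ᶠ y in nhdsWithin x {x}ᶜ,
      |f (dist x₀ y) - f t| / dist x y ≤ M t + ε := by
    filter_upwards [inter_mem_nhdsWithin {x}ᶜ (Metric.ball_mem_nhds x hδpos),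
      self_mem_nhdsWithin] with y hy hy'
    have hdy : dist x y < δ := by
      rw [dist_comm]; exact hy.2
    have hdy0 : 0 < dist x y := dist_pos.mpr (Ne.symm hy')
    have hmem : dist x₀ y ∈ Set.Ioo (t - δ) (t + δ) := by
      have h1 : |dist x₀ y - dist x₀ x| ≤ dist y x := by
        rw [dist_comm x₀ y, dist_comm x₀ x]; exact abs_dist_sub_le y x x₀
      rw [dist_comm y x] at h1
      have := abs_sub_lt_iff.mp (lt_of_le_of_lt h1 hdy)
      constructor <;> [linarith [this.2]; linarith [this.1]]
    have htmem : t ∈ Set.Ioo (t - δ) (t + δ) := by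
      constructor <;> linarith
    have hb := hlip _ hmem _ htmem
    rw [Real.norm_eq_abs, Real.norm_eq_abs] at hb
    have h2 : |dist x₀ y - t| ≤ dist x y := by
      have h1 : |dist x₀ y - dist x₀ x| ≤ dist y x := by
        rw [dist_comm x₀ y, dist_comm x₀ x]; exact abs_dist_sub_le y x x₀
      rw [dist_comm y x] at h1; exact h1
    rw [div_le_iff₀ hdy0]
    calc |f (dist x₀ y) - f t| ≤ (M t + ε) * |dist x₀ y - t| := hb
      _ ≤ (M t + ε) * dist x y := by
          apply mul_le_mul_of_nonneg_left h2
          linarith [hMnonneg t ht.le]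
  exact hev
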